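/- The family of univariate logistic cumulative distribution functions {x ↦ 1/(1 + exp(-(x-μ)/σ)) : μ ∈ ℝ, σ > 0} is linearly independent over ℝ (as functions on ℝ). -/

import Mathlib

open Complex Filter Topology Finset

noncomputable def Fc (p : ℝ × {σ : ℝ // 0 < σ}) (z : ℂ) : ℂ :=
  (1 + Complex.exp (-(z - (p.1 : ℂ)) / ((p.2 : ℝ) : ℂ)))⁻¹

lemma exp_eq_neg_one_exists {w : ℂ} (hw : Complex.exp w = -1) :
    ∃ n : ℤ, w = (2 * n + 1) * (Real.pi : ℂ) * I := by
  have h1 : Complex.exp (w - Real.pi * I) = 1 := by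
    rw [Complex.exp_sub, Complex.exp_pi_mul_I, hw]; norm_num
  obtain ⟨n, hn⟩ := Complex.exp_eq_one_iff.mp h1
  refine ⟨n, ?_⟩
  have hw' : w = n * (2 * Real.pi * I) + Real.pi * I := by
    have := sub_eq_iff_eq_add.mp hn
    simpa using this
  rw [hw']; ring

lemma one_add_exp_ne_zero {w : ℂ} (hw : w.re ≠ 0 ∨ |w.im| < Real.pi) :
    1 + Complex.exp w ≠ 0 := by
  intro h
  have he : Complex.exp w = -1 := by linear_combination h
  obtain ⟨n, hn⟩ := exp_eq_neg_one_exists he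
  have hre : w.re = 0 := by rw [hn]; simp
  have him : w.im = (2 * n + 1) * Real.pi := by
    rw [hn]; simp [Complex.mul_I_im]
  rcases hw with h' | h'
  · exact h' hre
  · rw [him] at h'
    have hπ := Real.pi_pos
    have h1 : (1 : ℝ) ≤ |2 * (n : ℝ) + 1| := by
      have hz : (2 * n + 1 : ℤ) ≠ 0 := by omega
      have := Int.one_le_abs hz
      calc (1:ℝ) ≤ |(2 * n + 1 : ℤ)| := by exact_mod_cast this
        _ = |2 * (n:ℝ) + 1| := by push_cast; ring_nf
    have habs : |(2 * (n:ℝ) + 1) * Real.pi| = |2 * (n:ℝ) + 1| * Real.pi := by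
      rw [abs_mul, abs_of_pos hπ]
    rw [habs] at h'
    nlinarith

lemma Fc_ofReal (p : ℝ × {σ : ℝ // 0 < σ}) (x : ℝ) :
    Fc p x = ((1 + Real.exp (-(x - p.1) / (p.2 : ℝ)))⁻¹ : ℝ) := by
  unfold Fc
  push_cast
  norm_num

lemma strip_open (a : ℝ) : IsOpen {z : ℂ | |z.im| < a} :=
  isOpen_lt (continuous_abs.comp Complex.continuous_im) continuous_const

lemma strip_preconnected (a : ℝ) : IsPreconnected {z : ℂ | |z.im| < a} := by
  have : Convex ℝ {z : ℂ | |z.im| < a} := by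
    have h := (convex_Ioo (-a) a).linear_preimage Complex.imLm
    convert h using 1
    ext z
    simp [Complex.imLm, abs_lt, Set.mem_Ioo]
    all_goals (ext z; simp [Complex.imLm, abs_lt, Set.mem_Ioo])
  exact this.isPreconnected

lemma key (s : Finset (ℝ × {σ : ℝ // 0 < σ})) (g : ℝ × {σ : ℝ // 0 < σ} → ℝ)
    (i0 : ℝ × {σ : ℝ // 0 < σ}) (hi0 : i0 ∈ s)
    (hmin : ∀ p ∈ s, (i0.2 : ℝ) ≤ (p.2 : ℝ))
    (hx : ∀ x : ℝ, ∑ p ∈ s, g p * (1 + Real.exp (-(x - p.1) / (p.2 : ℝ)))⁻¹ = 0) :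
    g i0 = 0 := by
  have hσ0 : (0:ℝ) < (i0.2 : ℝ) := i0.2.2
  set a : ℝ := Real.pi * (i0.2 : ℝ) with ha
  have hapos : 0 < a := mul_pos Real.pi_pos hσ0
  set S : Set ℂ := {z : ℂ | |z.im| < a} with hS
  -- denominators do not vanish on the strip
  have hden : ∀ p ∈ s, ∀ z ∈ S, 1 + Complex.exp (-(z - (p.1:ℂ)) / ((p.2:ℝ):ℂ)) ≠ 0 := by
    intro p hp z hz
    apply one_add_exp_ne_zero
    right
    have him : (-(z - (p.1:ℂ)) / ((p.2:ℝ):ℂ)).im = -z.im / (p.2:ℝ) := by simp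
    rw [him, abs_div, abs_neg, abs_of_pos p.2.2, div_lt_iff₀ p.2.2]
    have h1 : |z.im| < a := hz
    have h2 : a ≤ Real.pi * (p.2:ℝ) := by
      rw [ha]
      exact mul_le_mul_of_nonneg_left (hmin p hp) Real.pi_pos.le
    linarith
  -- the complexified combination is differentiable on the strip
  have hdiff : DifferentiableOn ℂ (fun z => ∑ p ∈ s, (g p : ℂ) * Fc p z) S := by
    apply DifferentiableOn.fun_sum
    intro p hp
    apply DifferentiableOn.const_mul
    apply DifferentiableOn.inv
    · exact (((differentiable_id.sub_const _).neg.div_const _).cexp.const_add 1).differentiableOn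
    · exact fun z hz => hden p hp z hz
  -- it vanishes on the reals, hence on the strip
  have hreal : ∀ x : ℝ, ∑ p ∈ s, (g p : ℂ) * Fc p (x : ℂ) = 0 := by
    intro x
    simp only [Fc_ofReal, ← Complex.ofReal_mul, ← Complex.ofReal_sum, hx x, Complex.ofReal_zero]
  have hG0 : Set.EqOn (fun z => ∑ p ∈ s, (g p : ℂ) * Fc p z) 0 S := by
    apply (hdiff.analyticOnNhd (strip_open a)).eqOn_zero_of_preconnected_of_frequently_eq_zero
      (strip_preconnected a) (show (0:ℂ) ∈ S by simp [hS, hapos])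
    have hu : Tendsto (fun n : ℕ => ((1 / ((n:ℝ)+1) : ℝ) : ℂ)) atTop (𝓝[≠] (0:ℂ)) := by
      apply tendsto_nhdsWithin_of_tendsto_nhds_of_eventually_within
      · have h1 : Tendsto (fun n : ℕ => 1 / ((n:ℝ)+1)) atTop (𝓝 0) := tendsto_one_div_add_atTop_nhds_zero_nat
        have h2 := (Complex.continuous_ofReal.tendsto 0).comp h1
        simpa [Function.comp_def] using h2
      · filter_upwards with n
        simp only [Set.mem_compl_iff, Set.mem_singleton_iff, Complex.ofReal_ne_zero]
        positivity
    exact hu.frequently (Filter.Frequently.of_forall fun n => hreal _)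
  -- the approach sequence to the lowest pole of the minimal-σ member
  set t : ℕ → ℝ := fun n => 1 - 1/((n:ℝ)+1) with htdef
  have ht : ∀ n : ℕ, 0 ≤ t n ∧ t n < 1 := by
    intro n
    have h1 : (0:ℝ) < 1/((n:ℝ)+1) := by positivity
    have h2 : 1/((n:ℝ)+1) ≤ 1 := by
      rw [div_le_one (by positivity)]; linarith [Nat.cast_nonneg (α := ℝ) n]
    refine ⟨?_, ?_⟩
    · show (0:ℝ) ≤ 1 - 1/((n:ℝ)+1)
      linarith
    · show (1:ℝ) - 1/((n:ℝ)+1) < 1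
      linarith
  set z : ℕ → ℂ := fun n => ((i0.1:ℝ):ℂ) + ((a * t n : ℝ):ℂ) * I with hzdef
  have hzS : ∀ n, z n ∈ S := by
    intro n
    have him : (z n).im = a * t n := by simp [hzdef]
    show |(z n).im| < a
    rw [him, abs_lt]
    obtain ⟨h0, h1⟩ := ht n
    constructor <;> nlinarith
  have hzt : Tendsto t atTop (𝓝 1) := by
    simpa [htdef, one_div] using tendsto_one_div_add_atTop_nhds_zero_nat.const_sub (1:ℝ)
  set p0 : ℂ := ((i0.1:ℝ):ℂ) + ((a:ℝ):ℂ) * I with hp0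
  have hz : Tendsto z atTop (𝓝 p0) := by
    have hc : Continuous (fun r : ℝ => ((i0.1:ℝ):ℂ) + ((a * r : ℝ):ℂ) * I) := by
      push_cast
      fun_prop
    have h2 := (hc.tendsto 1).comp hzt
    simpa [hzdef, hp0, Function.comp_def] using h2
  -- the denominator of the minimal member tends to zero along the sequence
  set d : ℕ → ℂ := fun n => 1 + Complex.exp (-(z n - ((i0.1:ℝ):ℂ)) / ((i0.2:ℝ):ℂ)) with hddef
  have hdne : ∀ n, d n ≠ 0 := fun n => hden i0 hi0 (z n) (hzS n)
  have hσ0C : ((i0.2:ℝ):ℂ) ≠ 0 := by exact_mod_cast ne_of_gt hσ0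
  have hdsimp : ∀ n, d n = 1 + Complex.exp (-(((Real.pi * t n : ℝ):ℂ) * I)) := by
    intro n
    have harg : -(z n - ((i0.1:ℝ):ℂ)) / ((i0.2:ℝ):ℂ) = -(((Real.pi * t n : ℝ):ℂ) * I) := by
      simp only [hzdef, ha]
      push_cast
      field_simp
      ring
    simp only [hddef, harg]
  have hd0 : Tendsto d atTop (𝓝 0) := by
    have hc : Continuous (fun r : ℝ => (1:ℂ) + Complex.exp (-(((Real.pi * r : ℝ):ℂ) * I))) := by
      push_cast
      fun_prop
    have h1 := (hc.tendsto 1).comp hzt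
    have hval : (1 : ℂ) + Complex.exp (-(((Real.pi * 1 : ℝ):ℂ) * I)) = 0 := by
      rw [mul_one, Complex.exp_neg, Complex.exp_pi_mul_I]
      norm_num
    rw [funext hdsimp]
    rw [hval] at h1
    exact h1
  -- limit of the other terms at p0
  have hL : Tendsto (fun n => ∑ p ∈ s.erase i0, (g p : ℂ) * Fc p (z n)) atTop
      (𝓝 (∑ p ∈ s.erase i0, (g p:ℂ) * Fc p p0)) := by
    apply tendsto_finset_sum
    intro p hp
    apply Tendsto.const_mul
    obtain ⟨hpne, hps⟩ := Finset.mem_erase.mp hp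
    have hne : 1 + Complex.exp (-(p0 - (p.1:ℂ)) / ((p.2:ℝ):ℂ)) ≠ 0 := by
      apply one_add_exp_ne_zero
      have him : (-(p0 - (p.1:ℂ)) / ((p.2:ℝ):ℂ)).im = -a / (p.2:ℝ) := by simp [hp0]
      have hre : (-(p0 - (p.1:ℂ)) / ((p.2:ℝ):ℂ)).re = (p.1 - i0.1) / (p.2:ℝ) := by simp [hp0]
      rcases lt_or_eq_of_le (hmin p hps) with hlt | heq
      · right
        rw [him, abs_div, abs_neg, abs_of_pos hapos, abs_of_pos p.2.2, div_lt_iff₀ p.2.2, ha]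
        nlinarith [Real.pi_pos]
      · left
        rw [hre]
        have hμ : p.1 - i0.1 ≠ 0 := by
          rw [sub_ne_zero]
          intro hμ
          exact hpne (Prod.ext hμ (Subtype.ext heq.symm))
        exact div_ne_zero hμ (ne_of_gt p.2.2)
    have hcont : ContinuousAt (Fc p) p0 := by
      unfold Fc
      exact (Continuous.continuousAt (by fun_prop)).inv₀ hne
    exact hcont.tendsto.comp hz
  -- the relation along the sequence
  have hrel : ∀ n, (g i0 : ℂ) * Fc i0 (z n) = -∑ p ∈ s.erase i0, (g p:ℂ) * Fc p (z n) := by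
    intro n
    have h0 : ∑ p ∈ s, (g p : ℂ) * Fc p (z n) = 0 := hG0 (hzS n)
    have h1 := Finset.add_sum_erase s (fun p => (g p:ℂ) * Fc p (z n)) hi0
    apply eq_neg_of_add_eq_zero_left
    rw [h1, h0]
  have hFd : ∀ n, Fc i0 (z n) = (d n)⁻¹ := fun n => rfl
  have hconst : ∀ n, ((g i0:ℂ) * Fc i0 (z n)) * d n = (g i0:ℂ) := by
    intro n
    rw [hFd n, mul_assoc, inv_mul_cancel₀ (hdne n), mul_one]
  have hkey : Tendsto (fun n => ((g i0:ℂ) * Fc i0 (z n)) * d n) atTop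
      (𝓝 ((-∑ p ∈ s.erase i0, (g p:ℂ) * Fc p p0) * 0)) := by
    apply Tendsto.mul _ hd0
    rw [funext hrel]
    exact hL.neg
  rw [funext hconst] at hkey
  have hfin := tendsto_nhds_unique hkey tendsto_const_nhds
  rw [mul_zero] at hfin
  exact_mod_cast hfin.symm

lemma aux : ∀ s : Finset (ℝ × {σ : ℝ // 0 < σ}), ∀ g : ℝ × {σ : ℝ // 0 < σ} → ℝ,
    (∀ x : ℝ, ∑ p ∈ s, g p * (1 + Real.exp (-(x - p.1) / (p.2:ℝ)))⁻¹ = 0) →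
    ∀ p ∈ s, g p = 0 := by
  intro s
  induction s using Finset.strongInduction with
  | _ s ih =>
    intro g hx p hp
    have hne : s.Nonempty := ⟨p, hp⟩
    obtain ⟨i0, hi0, hmin⟩ := s.exists_min_image (fun q => (q.2:ℝ)) hne
    have hg0 : g i0 = 0 := key s g i0 hi0 hmin hx
    have hx' : ∀ x : ℝ, ∑ q ∈ s.erase i0,
        g q * (1 + Real.exp (-(x - q.1) / (q.2:ℝ)))⁻¹ = 0 := by
      intro x
      have h1 := Finset.add_sum_erase s
        (fun q => g q * (1 + Real.exp (-(x - q.1) / (q.2:ℝ)))⁻¹) hi0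
      have h2 := hx x
      calc ∑ q ∈ s.erase i0, g q * (1 + Real.exp (-(x - q.1) / (q.2:ℝ)))⁻¹
          = ∑ q ∈ s, g q * (1 + Real.exp (-(x - q.1) / (q.2:ℝ)))⁻¹
            - g i0 * (1 + Real.exp (-(x - i0.1) / (i0.2:ℝ)))⁻¹ := by rw [← h1]; ring
        _ = 0 := by rw [h2, hg0]; ring
    rcases eq_or_ne p i0 with rfl | hpne
    · exact hg0
    · exact ih (s.erase i0) (Finset.erase_ssubset hi0) g hx' p
        (Finset.mem_erase.mpr ⟨hpne, hp⟩)

theorem logistic_cdf_family_linearIndependent :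
    LinearIndependent ℝ
      (fun p : ℝ × {σ : ℝ // 0 < σ} => fun x : ℝ =>
        (1 + Real.exp (-(x - p.1) / (p.2 : ℝ)))⁻¹) := by
  rw [linearIndependent_iff']
  intro s g hsum i hi
  apply aux s g ?_ i hi
  intro x
  have h := congrFun hsum x
  simpa [Finset.sum_apply] using h
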